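/- Let x, y be strings over a metric space and let c(x), c(y) denote the strings obtained by collapsing every run in x and y to a single letter. Then dtw(c(x), c(y)) ≤ dtw(x, y). -/
import Mathlib


/-- `xb` is an expansion of `x`: each letter of `x` is duplicated in place a positive
number of times. -/
def IsExpansion {α : Type*} (x xb : List α) : Prop :=
  ∃ ks : List ℕ, ks.length = x.length ∧ (∀ k ∈ ks, 0 < k) ∧
    xb = (List.zipWith (fun a k => List.replicate k a) x ks).flatten

/-- `(xb, yb)` is a correspondence between `x` and `y`: a pair of equal-length expansions. -/
def IsCorrespondence {α : Type*} (x y xb yb : List α) : Prop :=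
  IsExpansion x xb ∧ IsExpansion y yb ∧ xb.length = yb.length

/-- The cost of a correspondence: summed distances of aligned letters. -/
noncomputable def corrCost {α : Type*} (δ : α → α → ℝ) (xb yb : List α) : ℝ :=
  (List.zipWith δ xb yb).sum

/-- Dynamic time warping distance with respect to a distance function `δ`. -/
noncomputable def dtw {α : Type*} (δ : α → α → ℝ) (x y : List α) : ℝ :=
  sInf {c | ∃ xb yb, IsCorrespondence x y xb yb ∧ c = corrCost δ xb yb}

/-- Generalized Hamming distance on letters. -/
noncomputable def hamDist {α : Type*} [DecidableEq α] (a b : α) : ℝ := if a = b then 0 else 1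

/-- DTW over generalized Hamming space. -/
noncomputable def dtw0 {α : Type*} [DecidableEq α] (x y : List α) : ℝ := dtw hamDist x y

section Aux

variable {α : Type*}

lemma exp_nil {xb : List α} : IsExpansion ([] : List α) xb ↔ xb = [] := by
  constructor
  · rintro ⟨ks, hlen, -, rfl⟩
    have : ks = [] := List.length_eq_zero_iff.mp (by simpa using hlen)
    simp [this]
  · rintro rfl; exact ⟨[], by simp, by simp, by simp⟩

lemma exp_cons {a : α} {x xb : List α} :
    IsExpansion (a :: x) xb ↔
      ∃ k, 0 < k ∧ ∃ xb', IsExpansion x xb' ∧ xb = List.replicate k a ++ xb' := by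
  constructor
  · rintro ⟨ks, hlen, hpos, rfl⟩
    cases ks with
    | nil => simp at hlen
    | cons k ks' =>
      refine ⟨k, hpos k (by simp), _,
        ⟨ks', by simpa using hlen, fun j hj => hpos j (by simp [hj]), rfl⟩, ?_⟩
      simp
  · rintro ⟨k, hk, xb', ⟨ks, hlen, hpos, rfl⟩, rfl⟩
    refine ⟨k :: ks, by simp [hlen], ?_, by simp⟩
    rintro j hj
    rcases List.mem_cons.mp hj with rfl | h
    · exact hk
    · exact hpos _ h

lemma exp_append {u v z : List α} (h : IsExpansion (u ++ v) z) :
    ∃ zu zv, IsExpansion u zu ∧ IsExpansion v zv ∧ z = zu ++ zv := by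
  induction u generalizing z with
  | nil => exact ⟨[], z, exp_nil.mpr rfl, h, rfl⟩
  | cons a u ih =>
    rw [List.cons_append, exp_cons] at h
    obtain ⟨k, hk, z', hz', rfl⟩ := h
    obtain ⟨zu, zv, h1, h2, rfl⟩ := ih hz'
    exact ⟨List.replicate k a ++ zu, zv, exp_cons.mpr ⟨k, hk, zu, h1, rfl⟩, h2, by simp⟩

lemma exp_replicate {k : ℕ} {a : α} {z : List α} (hk : 0 < k)
    (h : IsExpansion (List.replicate k a) z) : ∃ m, 0 < m ∧ z = List.replicate m a := by
  induction k generalizing z with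
  | zero => omega
  | succ k ih =>
    rw [List.replicate_succ, exp_cons] at h
    obtain ⟨m, hm, z', hz', rfl⟩ := h
    rcases Nat.eq_zero_or_pos k with rfl | hk'
    · simp only [List.replicate_zero, exp_nil] at hz'
      exact ⟨m, hm, by simp [hz']⟩
    · obtain ⟨m', hm', rfl⟩ := ih hk' hz'
      exact ⟨m + m', by omega, by rw [← List.replicate_add]⟩

lemma exp_trans {x y z : List α} (h1 : IsExpansion x y) (h2 : IsExpansion y z) :
    IsExpansion x z := by
  induction x generalizing y z with
  | nil =>
    rw [exp_nil] at h1; subst h1; exact h2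
  | cons a x ih =>
    rw [exp_cons] at h1
    obtain ⟨k, hk, y', hy', rfl⟩ := h1
    obtain ⟨zu, zv, hzu, hzv, rfl⟩ := exp_append h2
    obtain ⟨m, hm, rfl⟩ := exp_replicate hk hzu
    exact exp_cons.mpr ⟨m, hm, zv, ih hy' hzv, rfl⟩

lemma exp_dup {w : List α} {a : α} {l : List α} (h : IsExpansion w (a :: l)) :
    IsExpansion w (a :: a :: l) := by
  cases w with
  | nil => rw [exp_nil] at h; simp at h
  | cons c w' =>
    rw [exp_cons] at h
    obtain ⟨k, hk, z', hz', heq⟩ := h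
    have hc : c = a := by
      cases k with
      | zero => omega
      | succ k =>
        have := congrArg List.head? heq
        simp [List.replicate_succ] at this
        exact this.symm
    subst hc
    refine exp_cons.mpr ⟨k + 1, by omega, z', hz', ?_⟩
    rw [List.replicate_succ, List.cons_append, ← heq]

lemma exp_destutter' [DecidableEq α] (a : α) (l : List α) :
    IsExpansion (List.destutter' (· ≠ ·) a l) (a :: l) := by
  induction l generalizing a with
  | nil =>
    rw [List.destutter'_nil]
    exact exp_cons.mpr ⟨1, one_pos, [], exp_nil.mpr rfl, by simp⟩
  | cons b l ih =>
    rw [List.destutter'_cons]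
    by_cases hab : a ≠ b
    · rw [if_pos hab]
      exact exp_cons.mpr ⟨1, one_pos, b :: l, ih b, by simp⟩
    · rw [if_neg hab]
      push_neg at hab
      subst hab
      exact exp_dup (ih a)

lemma exp_destutter [DecidableEq α] (x : List α) : IsExpansion (x.destutter (· ≠ ·)) x := by
  cases x with
  | nil => exact exp_nil.mpr rfl
  | cons a l => exact exp_destutter' a l

lemma exp_nil_iff {x xb : List α} (h : IsExpansion x xb) : x = [] ↔ xb = [] := by
  cases x with
  | nil => rw [exp_nil] at h; simp [h]
  | cons a l =>
    rw [exp_cons] at h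
    obtain ⟨k, hk, z, hz, rfl⟩ := h
    constructor
    · intro hc; simp at hc
    · intro hc
      rw [List.append_eq_nil_iff] at hc
      have := congrArg List.length hc.1
      simp at this
      omega

lemma exp_length (x : List α) {n : ℕ} (hn : 0 < n) :
    ∃ xb, IsExpansion x xb ∧ xb.length = x.length * n := by
  induction x with
  | nil => exact ⟨[], exp_nil.mpr rfl, by simp⟩
  | cons a l ih =>
    obtain ⟨xb, hxb, hlen⟩ := ih
    refine ⟨List.replicate n a ++ xb, exp_cons.mpr ⟨n, hn, xb, hxb, rfl⟩, ?_⟩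
    simp [hlen]; ring

lemma corrCost_nonneg [MetricSpace α] : ∀ (xb yb : List α), 0 ≤ corrCost dist xb yb
  | [], _ => le_of_eq (by simp [corrCost])
  | _ :: _, [] => le_of_eq (by simp [corrCost])
  | a :: xs, b :: ys => by
    have h := corrCost_nonneg xs ys
    simp only [corrCost, List.zipWith_cons_cons, List.sum_cons]
    exact add_nonneg dist_nonneg h

lemma dtw_of_no_corr {δ : α → α → ℝ} {x y : List α} (h : ¬(x = [] ↔ y = [])) :
    dtw δ x y = 0 := by
  unfold dtw
  convert Real.sInf_empty
  rw [Set.eq_empty_iff_forall_notMem]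
  rintro c ⟨xb, yb, ⟨hex, hey, hl⟩, -⟩
  exact h (by rw [exp_nil_iff hex, exp_nil_iff hey, ← List.length_eq_zero_iff,
    ← List.length_eq_zero_iff, hl])

end Aux

/-- Collapsing each run to a single letter does not increase DTW. -/
theorem dtw_destutter_le {α : Type*} [MetricSpace α] [DecidableEq α] (x y : List α) :
    dtw dist (x.destutter (· ≠ ·)) (y.destutter (· ≠ ·)) ≤ dtw dist x y := by
  by_cases hx : x = [] <;> by_cases hy : y = []
  · subst hx; subst hy; exact le_refl _
  · have h1 : dtw dist (x.destutter (· ≠ ·)) (y.destutter (· ≠ ·)) = 0 := by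
      refine dtw_of_no_corr fun h => ?_
      rw [exp_nil_iff (exp_destutter x), exp_nil_iff (exp_destutter y)] at h
      exact hy (h.mp hx)
    have h2 : dtw dist x y = 0 := dtw_of_no_corr (by simp [hx, hy])
    rw [h1, h2]
  · have h1 : dtw dist (x.destutter (· ≠ ·)) (y.destutter (· ≠ ·)) = 0 := by
      refine dtw_of_no_corr fun h => ?_
      rw [exp_nil_iff (exp_destutter x), exp_nil_iff (exp_destutter y)] at h
      exact hx (h.mpr hy)
    have h2 : dtw dist x y = 0 := dtw_of_no_corr (by simp [hx, hy])
    rw [h1, h2]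
  · unfold dtw
    have hsub : {c | ∃ xb yb, IsCorrespondence x y xb yb ∧ c = corrCost dist xb yb} ⊆
        {c | ∃ xb yb, IsCorrespondence (x.destutter (· ≠ ·)) (y.destutter (· ≠ ·)) xb yb ∧
          c = corrCost dist xb yb} := by
      rintro c ⟨xb, yb, ⟨hex, hey, hl⟩, rfl⟩
      exact ⟨xb, yb, ⟨exp_trans (exp_destutter x) hex, exp_trans (exp_destutter y) hey, hl⟩, rfl⟩
    have hbdd : BddBelow {c | ∃ xb yb,
        IsCorrespondence (x.destutter (· ≠ ·)) (y.destutter (· ≠ ·)) xb yb ∧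
        c = corrCost dist xb yb} := by
      refine ⟨0, ?_⟩
      rintro c ⟨xb, yb, -, rfl⟩
      exact corrCost_nonneg xb yb
    have hne : Set.Nonempty {c | ∃ xb yb, IsCorrespondence x y xb yb ∧
        c = corrCost dist xb yb} := by
      obtain ⟨xb, hxb, hxl⟩ := exp_length x (List.length_pos_iff.mpr hy)
      obtain ⟨yb, hyb, hyl⟩ := exp_length y (List.length_pos_iff.mpr hx)
      exact ⟨_, xb, yb, ⟨hxb, hyb, by rw [hxl, hyl, Nat.mul_comm]⟩, rfl⟩
    exact csInf_le_csInf hbdd hne hsub
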